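/- The scalar Forchheimer relation is monotone: for β > 0 and the map F : ℝⁿ → ℝⁿ defined by F(η) = G(‖η‖)·η with G(ξ) = 2/(1+√(1+4βξ)), one has ⟨F(η₁) − F(η₂), η₁ − η₂⟩ ≥ 0 for all η₁, η₂ ∈ ℝⁿ. -/
import Mathlib


open scoped RealInnerProductSpace

theorem forchheimer_map_monotone
    (n : ℕ) (hn : 1 ≤ n) (β : ℝ) (hβ : 0 < β)
    (G : ℝ → ℝ)
    (hG : ∀ ξ, G ξ = 2 / (1 + Real.sqrt (1 + 4 * β * ξ)))
    (F : EuclideanSpace ℝ (Fin n) → EuclideanSpace ℝ (Fin n))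
    (hF : ∀ η, F η = G ‖η‖ • η) :
    ∀ η₁ η₂ : EuclideanSpace ℝ (Fin n),
      0 ≤ ⟪F η₁ - F η₂, η₁ - η₂⟫ := by
  -- G is nonnegative
  have hGnonneg : ∀ ξ : ℝ, 0 ≤ G ξ := by
    intro ξ
    rw [hG]
    have h1 : (0:ℝ) ≤ Real.sqrt (1 + 4 * β * ξ) := Real.sqrt_nonneg _
    positivity
  -- key formula: for x ≥ 0, x * G x = (√(1+4βx) - 1)/(2β)
  have hkey : ∀ x : ℝ, 0 ≤ x → x * G x = (Real.sqrt (1 + 4 * β * x) - 1) / (2 * β) := by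
    intro x hx
    rw [hG]
    have harg : (0:ℝ) ≤ 1 + 4 * β * x := by nlinarith
    set s := Real.sqrt (1 + 4 * β * x) with hs
    have hs2 : s ^ 2 = 1 + 4 * β * x := Real.sq_sqrt harg
    have hsnn : 0 ≤ s := Real.sqrt_nonneg _
    have hden : (1:ℝ) + s ≠ 0 := by positivity
    field_simp
    nlinarith [hs2]
  -- monotonicity of x ↦ x * G x
  have hmono : ∀ a b : ℝ, 0 ≤ a → 0 ≤ b → 0 ≤ (a - b) * (a * G a - b * G b) := by
    intro a b ha hb
    rcases le_total a b with h | h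
    · have hs : Real.sqrt (1 + 4 * β * a) ≤ Real.sqrt (1 + 4 * β * b) := by
        apply Real.sqrt_le_sqrt; nlinarith
      have h1 : a * G a ≤ b * G b := by
        rw [hkey a ha, hkey b hb]
        gcongr
      nlinarith
    · have hs : Real.sqrt (1 + 4 * β * b) ≤ Real.sqrt (1 + 4 * β * a) := by
        apply Real.sqrt_le_sqrt; nlinarith
      have h1 : b * G b ≤ a * G a := by
        rw [hkey a ha, hkey b hb]
        gcongr
      nlinarith
  intro η₁ η₂
  rw [hF, hF]
  set a := ‖η₁‖
  set b := ‖η₂‖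
  have ha : 0 ≤ a := norm_nonneg _
  have hb : 0 ≤ b := norm_nonneg _
  have hI : ⟪η₁, η₂⟫ ≤ a * b := real_inner_le_norm η₁ η₂
  have hexp : ⟪G a • η₁ - G b • η₂, η₁ - η₂⟫
      = G a * a ^ 2 + G b * b ^ 2 - (G a + G b) * ⟪η₁, η₂⟫ := by
    rw [inner_sub_left, inner_sub_right, inner_sub_right, real_inner_smul_left,
      real_inner_smul_left, real_inner_smul_left, real_inner_smul_left,
      real_inner_self_eq_norm_sq, real_inner_self_eq_norm_sq,
      real_inner_comm η₂ η₁]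
    ring
  rw [hexp]
  have h1 := hmono a b ha hb
  have h2 : 0 ≤ (G a + G b) * (a * b - ⟪η₁, η₂⟫) :=
    mul_nonneg (add_nonneg (hGnonneg a) (hGnonneg b)) (by linarith)
  nlinarith [h1, h2]
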